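/- Let k be a field, let d, n be integers with 1 ≤ n < d, let ζ ∈ k be a primitive d-th root of unity, and let m ≥ 2. Let V = (Fin (m−2) → k) × (Fin n → k) and let g : V → V be the k-linear automorphism which is the identity on the first factor and multiplication by ζ on the second factor. Then for every natural number s with s > m − 2, any ω ∈ ⋀^s V satisfying (⋀^s g)(ω) = ω is zero. -/

import Mathlib

open ExteriorAlgebra

section Aux
open Polynomial

lemma aux_aeval_fixed {k V : Type*} [Field k] [AddCommGroup V] [Module k V]
    (F : Module.End k V) (ω : V) (hF : F ω = ω) (p : Polynomial k) :
    (aeval F p) ω = (p.eval 1) • ω := by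
  have hpow : ∀ j : ℕ, (F ^ j) ω = ω := by
    intro j
    induction j with
    | zero => rfl
    | succ j ih => rw [pow_succ, Module.End.mul_apply, hF, ih]
  induction p using Polynomial.induction_on' with
  | add p q hp hq => rw [map_add, LinearMap.add_apply, hp, hq, eval_add, add_smul]
  | monomial j a =>
    rw [aeval_monomial, eval_monomial, one_pow, mul_one, Module.End.mul_apply, hpow,
      Module.algebraMap_end_apply]

set_option maxHeartbeats 1000000 in
set_option synthInstance.maxHeartbeats 1000000 in
private theorem aux_vanish (k : Type*) [Field k] (d n : ℕ)
    (hn : 1 ≤ n) (hnd : n < d) (ζ : k) (hζ : IsPrimitiveRoot ζ d) (m : ℕ) (hm : 2 ≤ m)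
    (g : ((Fin (m - 2) → k) × (Fin n → k)) →ₗ[k] ((Fin (m - 2) → k) × (Fin n → k)))
    (hg : g = LinearMap.prodMap (LinearMap.id) (ζ • LinearMap.id))
    (s : ℕ) (hs : m - 2 < s)
    (ω : ⋀[k]^s ((Fin (m - 2) → k) × (Fin n → k)))
    (hω : (ExteriorAlgebra.map g).toLinearMap ω.1 = ω.1) :
    ω = 0 := by
  classical
  set F : Module.End k (ExteriorAlgebra k ((Fin (m - 2) → k) × (Fin n → k))) :=
    (ExteriorAlgebra.map g).toLinearMap with hFdef
  set b : Module.Basis (Fin (m - 2) ⊕ Fin n) k ((Fin (m - 2) → k) × (Fin n → k)) :=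
    (Pi.basisFun k (Fin (m - 2))).prod (Pi.basisFun k (Fin n)) with hbdef
  set w : (Fin (m - 2) ⊕ Fin n) → k := Sum.elim (fun _ => (1 : k)) (fun _ => ζ) with hwdef
  have hgb : ∀ j, g (b j) = w j • b j := by
    rintro (i | i)
    · have h1 : b (Sum.inl i) = (Pi.basisFun k (Fin (m - 2)) i, 0) := by simp [hbdef]
      rw [h1, hg]
      simp [Prod.smul_def, hwdef]
    · have h1 : b (Sum.inr i) = (0, Pi.basisFun k (Fin n) i) := by simp [hbdef]
      rw [h1, hg]
      simp [Prod.smul_def, hwdef]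
  set P : Polynomial k := ∏ t ∈ Finset.Icc 1 n, (X - C (ζ ^ t)) with hPdef
  have hkey : ∀ c : Fin s → (Fin (m - 2) ⊕ Fin n),
      (aeval F P) (ιMulti k s (fun i => b (c i))) = 0 := by
    intro c
    by_cases hc : Function.Injective c
    · set t := (Finset.univ.filter (fun i => (c i).isRight)).card with htdef
      have hF1 : F (ιMulti k s (fun i => b (c i))) = ζ ^ t • ιMulti k s (fun i => b (c i)) := by
        have h1 : F (ιMulti k s (fun i => b (c i)))
            = ιMulti k s (g ∘ fun i => b (c i)) := map_apply_ιMulti g _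
        rw [h1]
        have h2 : (g ∘ fun i => b (c i)) = fun i => w (c i) • b (c i) := by
          funext i; exact hgb (c i)
        rw [h2]
        have h3 := (ιMulti k s (M := (Fin (m - 2) → k) × (Fin n → k))).toMultilinearMap.map_smul_univ
          (fun i => w (c i)) (fun i => b (c i))
        simp only [AlternatingMap.coe_multilinearMap] at h3
        rw [h3]
        congr 1
        have h4 : ∀ i : Fin s, w (c i) = if (c i).isRight then ζ else 1 := by
          intro i; cases h : c i <;> simp [hwdef, h]
        rw [Finset.prod_congr rfl (fun i _ => h4 i), Finset.prod_ite, Finset.prod_const,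
          Finset.prod_const_one, mul_one]
      have ht_le : t ≤ n := by
        have hle : (Finset.univ.filter (fun i => (c i).isRight)).card ≤
            (Finset.univ.image (Sum.inr : Fin n → Fin (m - 2) ⊕ Fin n)).card :=
          Finset.card_le_card_of_injOn (fun i => c i)
            (fun i hi => by
              rcases Sum.isRight_iff.1 (Finset.mem_filter.1 hi).2 with ⟨j, hj⟩
              exact Finset.mem_image.2 ⟨j, Finset.mem_univ _, hj.symm⟩)
            (fun x _ y _ h => hc h)
        simpa [Finset.card_image_of_injective _ (Sum.inr_injective)] using hle
      have ht_ge : 1 ≤ t := by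
        rcases Nat.eq_zero_or_pos t with h0 | h1
        · exfalso
          have hall : ∀ i : Fin s, ¬ (c i).isRight := by
            intro i hi
            have hmem : i ∈ Finset.univ.filter (fun i => (c i).isRight) :=
              Finset.mem_filter.2 ⟨Finset.mem_univ _, hi⟩
            rw [Finset.card_eq_zero.1 h0] at hmem
            exact absurd hmem (Finset.notMem_empty _)
          have hcard : (Finset.univ : Finset (Fin s)).card ≤
              (Finset.univ.image (Sum.inl : Fin (m - 2) → Fin (m - 2) ⊕ Fin n)).card :=
            Finset.card_le_card_of_injOn (fun i => c i)
              (fun i _ => by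
                rcases Sum.isLeft_iff.1 (Sum.not_isRight.1 (hall i)) with ⟨j, hj⟩
                exact Finset.mem_image.2 ⟨j, Finset.mem_univ _, hj.symm⟩)
              (fun x _ y _ h => hc h)
          rw [Finset.card_univ, Fintype.card_fin,
            Finset.card_image_of_injective _ Sum.inl_injective, Finset.card_univ,
            Fintype.card_fin] at hcard
          omega
        · exact h1
      have htmem : t ∈ Finset.Icc 1 n := Finset.mem_Icc.2 ⟨ht_ge, ht_le⟩
      obtain ⟨Q, hQ⟩ := Finset.dvd_prod_of_mem (fun t => X - C (ζ ^ t)) htmem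
      rw [hPdef, hQ, mul_comm, map_mul, Module.End.mul_apply, map_sub, aeval_X, aeval_C,
        LinearMap.sub_apply, Module.algebraMap_end_apply, hF1, sub_self, map_zero]
    · rw [Function.not_injective_iff] at hc
      obtain ⟨i, j, hij, hne⟩ := hc
      have hz : ιMulti k s (fun i => b (c i)) = 0 :=
        AlternatingMap.map_eq_zero_of_eq _ _ (by rw [hij]) hne
      rw [hz, map_zero]
  have hannih : ∀ x ∈ ⋀[k]^s ((Fin (m - 2) → k) × (Fin n → k)), (aeval F P) x = 0 := by
    intro x hx
    rw [← ExteriorAlgebra.ιMulti_span_fixedDegree] at hx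
    induction hx using Submodule.span_induction with
    | mem x h =>
      obtain ⟨v, rfl⟩ := h
      have hv : ιMulti k s v = ∑ r : Fin s → (Fin (m - 2) ⊕ Fin n),
          (∏ i, b.repr (v i) (r i)) • ιMulti k s (fun i => b (r i)) := by
        have h1 : v = fun i => ∑ j, b.repr (v i) j • b j := by
          funext i; exact (b.sum_repr (v i)).symm
        conv_lhs => rw [h1]
        have h2 := (ιMulti k s (M := (Fin (m - 2) → k) × (Fin n → k))).toMultilinearMap.map_sum
          (g := fun i j => b.repr (v i) j • b j)
        simp only [AlternatingMap.coe_multilinearMap] at h2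
        rw [h2]
        refine Finset.sum_congr rfl (fun r _ => ?_)
        have h3 := (ιMulti k s (M := (Fin (m - 2) → k) × (Fin n → k))).toMultilinearMap.map_smul_univ
          (fun i => b.repr (v i) (r i)) (fun i => b (r i))
        simpa only [AlternatingMap.coe_multilinearMap] using h3
      rw [hv, map_sum]
      refine Finset.sum_eq_zero (fun r _ => ?_)
      rw [map_smul, hkey r, smul_zero]
    | zero => simp
    | add x y _ _ hx hy => rw [map_add, hx, hy, add_zero]
    | smul a x _ hx => rw [map_smul, hx, smul_zero]
  have h0 : (P.eval 1) • (ω : ExteriorAlgebra k ((Fin (m - 2) → k) × (Fin n → k))) = 0 := by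
    rw [← aux_aeval_fixed F _ hω P]
    exact hannih _ ω.2
  have hevP : P.eval 1 = ∏ t ∈ Finset.Icc 1 n, (1 - ζ ^ t) := by
    rw [hPdef, eval_prod]
    exact Finset.prod_congr rfl (fun t _ => by rw [eval_sub, eval_X, eval_C])
  have hne : P.eval 1 ≠ 0 := by
    rw [hevP, Finset.prod_ne_zero_iff]
    intro t ht
    rw [Finset.mem_Icc] at ht
    exact sub_ne_zero.2 (Ne.symm (hζ.pow_ne_one_of_pos_of_lt (Nat.one_le_iff_ne_zero.1 ht.1) (lt_of_le_of_lt ht.2 hnd)))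
  have hzero : (ω : ExteriorAlgebra k ((Fin (m - 2) → k) × (Fin n → k))) = 0 := by
    rcases smul_eq_zero.1 h0 with h | h
    · exact absurd h hne
    · exact h
  exact Subtype.ext hzero

end Aux

/-- A linear map `f : M →ₗ[k] N` sends the `s`-th exterior power of `M` into that of `N`. -/
theorem exteriorPower_map_mem {k : Type*} [Field k] {M N : Type*} [AddCommGroup M] [Module k M]
    [AddCommGroup N] [Module k N] (s : ℕ) (f : M →ₗ[k] N) (x : ExteriorAlgebra k M)
    (hx : x ∈ ⋀[k]^s M) : ExteriorAlgebra.map f x ∈ ⋀[k]^s N := by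
  have h : Submodule.map (ExteriorAlgebra.map f).toLinearMap (⋀[k]^s M) ≤ ⋀[k]^s N := by
    rw [Submodule.map_pow, ExteriorAlgebra.ι_range_map_map]
    exact pow_le_pow_left' (LinearMap.map_le_range) s
  exact h ⟨x, hx, rfl⟩

/-- The map `⋀^s f` induced on `s`-th exterior powers by a linear map `f`. -/
noncomputable def exteriorPowerMap {k : Type*} [Field k] {M N : Type*} [AddCommGroup M]
    [Module k M] [AddCommGroup N] [Module k N] (s : ℕ) (f : M →ₗ[k] N) :
    ⋀[k]^s M →ₗ[k] ⋀[k]^s N :=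
  (ExteriorAlgebra.map f).toLinearMap.restrict (fun x hx => exteriorPower_map_mem s f x hx)

/-- For `1 ≤ n < d`, `ζ` a primitive `d`-th root of unity, `m ≥ 2`, and
`g = id ⊕ (ζ • id)` on `V = k^{m-2} × k^n`: every `g`-invariant element of `⋀^s V`
vanishes when `s > m - 2`.  This is the computation `(Λ^s(1^{⊕ m-2} ⊕ χ^{⊕ n}))^{μ_d} = 0`. -/
theorem invariants_exterior_power_vanish (k : Type*) [Field k] (d n : ℕ)
    (hn : 1 ≤ n) (hnd : n < d) (ζ : k) (hζ : IsPrimitiveRoot ζ d) (m : ℕ) (hm : 2 ≤ m)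
    (g : ((Fin (m - 2) → k) × (Fin n → k)) →ₗ[k] ((Fin (m - 2) → k) × (Fin n → k)))
    (hg : g = LinearMap.prodMap (LinearMap.id) (ζ • LinearMap.id))
    (s : ℕ) (hs : m - 2 < s)
    (ω : ⋀[k]^s ((Fin (m - 2) → k) × (Fin n → k)))
    (hω : exteriorPowerMap s g ω = ω) :
    ω = 0 := by
  have hω' : (ExteriorAlgebra.map g).toLinearMap ω.1 = ω.1 := congrArg Subtype.val hω
  exact aux_vanish k d n hn hnd ζ hζ m hm g hg s hs ω hω'
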